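/- arXiv:1505.01961 — 2 statements merged into one kernel-verified Lean document; each statement's English description precedes it below -/
import Mathlib

section
/- For n ≥ 1, the number of distinct frames of Dyck paths of length 2n is exactly 2^{n-1}. -/
/-- A step of a Dyck path: `true` = up step (1,1), `false` = down step (1,-1). -/
def dstep (b : Bool) : ℤ := if b then 1 else -1

/-- Height of the path after its first `k` steps. -/
def dheight (p : List Bool) (k : ℕ) : ℤ := ((p.take k).map dstep).sum

/-- A Dyck path: ends at height 0 and never goes below the x-axis. -/
def IsDyck (p : List Bool) : Prop :=
  (p.map dstep).sum = 0 ∧ ∀ k, 0 ≤ dheight p k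

/-- Number of lattice points of the path at level `l` (its "feet" at level `l`). -/
def feet (p : List Bool) (l : ℤ) : ℕ :=
  ((List.range (p.length + 1)).map (dheight p)).count l

/-- The frame of a Dyck path: at position `k`, the number of its points at height `k`. -/
def frame (p : List Bool) : ℕ → ℕ := fun k => feet p (k : ℤ)

/-- `DyckFeet m l j` = number of Dyck paths of length `m` with exactly `j` points at level `l`. -/
noncomputable def DyckFeet (m : ℕ) (l : ℤ) (j : ℕ) : ℕ :=
  Set.ncard {p : List Bool | p.length = m ∧ IsDyck p ∧ feet p l = j}

/-- A sequence is admissible if it is the frame of some Dyck path. -/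
def Admissible (I : ℕ → ℕ) : Prop := ∃ p : List Bool, IsDyck p ∧ frame p = I

set_option linter.unusedVariables false
set_option linter.unnecessarySeqFocus false

lemma dheight_of_le (p : List Bool) {k : ℕ} (h : p.length ≤ k) :
    dheight p k = (p.map dstep).sum := by
  simp [dheight, List.take_of_length_le h]
lemma dheight_append_left (s t : List Bool) {k : ℕ} (h : k ≤ s.length) :
    dheight (s ++ t) k = dheight s k := by
  simp [dheight, List.take_append_of_le_length h]
lemma dheight_append_right (s t : List Bool) (j : ℕ) :
    dheight (s ++ t) (s.length + j) = dheight s s.length + dheight t j := by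
  simp [dheight, List.take_append, List.take_of_length_le (le_refl s.length),
    List.take_of_length_le (show (List.map dstep s).length ≤ s.length + j by simp)]
lemma feet_eq_countP (p : List Bool) (l : ℤ) :
    feet p l = (List.range (p.length + 1)).countP (fun k => dheight p k = l) := by
  simp [feet, List.count, List.countP_map]
  congr 1
lemma feet_append (s t : List Bool) (lev : ℤ) :
    feet (s ++ t) lev + (if lev = dheight s s.length then 1 else 0)
      = feet s lev + feet t (lev - dheight s s.length) := by
  set H := dheight s s.length with hH
  have hlen : (s ++ t).length + 1 = (s.length + 1) + t.length := by
    simp [List.length_append]; ring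
  rw [feet_eq_countP, feet_eq_countP, feet_eq_countP, hlen, List.range_add,
    List.countP_append, List.countP_map]
  have h1 : (List.range (s.length + 1)).countP (fun k => dheight (s ++ t) k = lev)
      = (List.range (s.length + 1)).countP (fun k => dheight s k = lev) := by
    apply List.countP_congr
    intro k hk
    rw [List.mem_range] at hk
    rw [dheight_append_left s t (by omega)]
  have h2 : ∀ k : ℕ, dheight (s ++ t) (s.length + 1 + k) = H + dheight t (1 + k) := by
    intro k
    have : s.length + 1 + k = s.length + (1 + k) := by omega
    rw [this, dheight_append_right]
  have h3 : (List.range t.length).countP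
        ((fun k => decide (dheight (s ++ t) k = lev)) ∘ (fun x => s.length + 1 + x))
      = (List.range t.length).countP (fun k => dheight t (1 + k) = lev - H) := by
    apply List.countP_congr
    intro k _
    simp [h2 k]
    constructor <;> intro h <;> omega
  have h4 : (List.range (t.length + 1)).countP (fun k => dheight t k = lev - H)
      = (if lev = H then 1 else 0)
        + (List.range t.length).countP (fun k => dheight t (1 + k) = lev - H) := by
    have : t.length + 1 = 1 + t.length := by omega
    rw [this, List.range_add, List.countP_append, List.countP_map]
    congr 1
    · simp only [List.range_succ, List.range_zero, List.nil_append, List.countP_cons,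
        List.countP_nil, Nat.zero_add]
      by_cases h : lev = H
      · simp [h, dheight]
      · have hne : ¬ ((0:ℤ) = lev - H) := by omega
        simp [h, dheight, hne]
  rw [h1, h3, h4]
  omega

-- new part
lemma dheight_cons (b : Bool) (p : List Bool) (k : ℕ) :
    dheight (b :: p) (k + 1) = dstep b + dheight p k := by
  simp [dheight, List.take_succ_cons]

lemma dheight_singleton (b : Bool) : dheight [b] 1 = dstep b := by
  simp [dheight]

lemma feet_nil (lev : ℤ) : feet [] lev = if lev = 0 then 1 else 0 := by
  have h0 : dheight [] 0 = 0 := rfl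
  simp only [feet, List.length_nil, Nat.zero_add, show List.range 1 = [0] from rfl, List.map_cons, List.map_nil,
    List.count_cons, List.count_nil, h0, beq_iff_eq]
  split_ifs <;> omega

lemma feet_singleton (b : Bool) (lev : ℤ) :
    feet [b] lev = (if lev = 0 then 1 else 0) + (if lev = dstep b then 1 else 0) := by
  have h0 : dheight [b] 0 = 0 := rfl
  have h1 : dheight [b] 1 = dstep b := dheight_singleton b
  simp only [feet, List.length_singleton, List.range_succ, List.range_zero, List.nil_append,
    List.map_cons, List.map_nil, List.map_append, List.count_append,
    List.count_cons, List.count_nil, h0, h1, beq_iff_eq]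
  split_ifs <;> omega

lemma feet_cons_true (q : List Bool) (lev : ℤ) :
    feet (true :: q) lev = (if lev = 0 then 1 else 0) + feet q (lev - 1) := by
  have h := feet_append [true] q lev
  have hh : dheight [true] ([true].length) = 1 := dheight_singleton true
  rw [hh] at h
  have hs := feet_singleton true lev
  have : dstep true = 1 := rfl
  rw [this] at hs
  simp only [List.singleton_append] at h
  omega

lemma feet_snoc_false (s : List Bool) (lev : ℤ) :
    feet (s ++ [false]) lev
      = feet s lev + (if lev = dheight s s.length - 1 then 1 else 0) := by
  have h := feet_append s [false] lev
  set H := dheight s s.length with hH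
  have hs := feet_singleton false (lev - H)
  have : dstep false = -1 := rfl
  rw [this] at hs
  have e1 : (lev - H = 0) ↔ (lev = H) := by constructor <;> intro <;> omega
  have e2 : (lev - H = -1) ↔ (lev = H - 1) := by constructor <;> intro <;> omega
  simp only [e1, e2] at hs
  omega

lemma isDyck_nil : IsDyck [] := by
  constructor
  · simp
  · intro k; simp [dheight]

lemma isDyck_append {s t : List Bool} (hs : IsDyck s) (ht : IsDyck t) :
    IsDyck (s ++ t) := by
  obtain ⟨hs0, hs1⟩ := hs
  obtain ⟨ht0, ht1⟩ := ht
  have hS : dheight s s.length = 0 := by rw [dheight_of_le s (le_refl _)]; exact hs0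
  constructor
  · simp [hs0, ht0]
  · intro k
    rcases le_or_gt k s.length with h | h
    · rw [dheight_append_left s t h]; exact hs1 k
    · have : k = s.length + (k - s.length) := by omega
      rw [this, dheight_append_right, hS, zero_add]
      exact ht1 _

lemma total_enclose (q : List Bool) (h : (q.map dstep).sum = 0) :
    ((true :: q ++ [false]).map dstep).sum = 0 := by
  simp [dstep, h]

lemma isDyck_enclose {q : List Bool} (hq : IsDyck q) :
    IsDyck (true :: q ++ [false]) := by
  obtain ⟨hq0, hq1⟩ := hq
  constructor
  · exact total_enclose q hq0
  · intro k
    rcases k with _ | j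
    · simp [dheight]
    · rw [show (true :: q ++ [false]) = true :: (q ++ [false]) from rfl, dheight_cons]
      have : dstep true = 1 := rfl
      rw [this]
      rcases le_or_gt j q.length with h | h
      · rw [dheight_append_left q [false] h]
        have := hq1 j; omega
      · have hj : j = q.length + (j - q.length) := by omega
        rw [hj, dheight_append_right]
        have hQ : dheight q q.length = 0 := by rw [dheight_of_le q (le_refl _)]; exact hq0
        have : dheight [false] (j - q.length) ≥ -1 := by
          rcases Nat.eq_zero_or_pos (j - q.length) with h0 | h0
          · rw [h0]; simp [dheight]
          · rw [dheight_of_le [false] (by simp; omega)]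
            simp [dstep]
        omega

lemma feet_enclose {q : List Bool} (hq0 : (q.map dstep).sum = 0) (lev : ℤ) :
    feet (true :: q ++ [false]) lev
      = (if lev = 0 then 2 else 0) + feet q (lev - 1) := by
  rw [show (true :: q ++ [false]) = (true :: q) ++ [false] from rfl, feet_snoc_false,
    feet_cons_true]
  have : dheight (true :: q) (true :: q).length = 1 := by
    rw [dheight_of_le _ (le_refl _)]
    simp [dstep, hq0]
  rw [this]
  by_cases p : lev = 0 <;> simp [p] <;> ring

def pk : ℕ → List Bool
  | 0 => []
  | m+1 => (true :: ([] : List Bool) ++ [false]) ++ pk m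

lemma pk_length (m : ℕ) : (pk m).length = 2 * m := by
  induction m with
  | zero => rfl
  | succ m ih => simp [pk, ih]; omega

lemma isDyck_pk (m : ℕ) : IsDyck (pk m) := by
  induction m with
  | zero => exact isDyck_nil
  | succ m ih => exact isDyck_append (isDyck_enclose isDyck_nil) ih

lemma feet_pk (m : ℕ) (lev : ℤ) :
    feet (pk m) lev = if lev = 0 then m + 1 else if lev = 1 then m else 0 := by
  induction m with
  | zero => rw [show pk 0 = [] from rfl, feet_nil]; split_ifs <;> omega
  | succ m ih =>
    have h := feet_append (true :: ([] : List Bool) ++ [false]) (pk m) lev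
    have hH : dheight (true :: ([] : List Bool) ++ [false])
        ((true :: ([] : List Bool) ++ [false]).length) = 0 := by
      rw [dheight_of_le _ (le_refl _)]; simp [dstep]
    rw [hH, sub_zero] at h
    have he : feet (true :: ([] : List Bool) ++ [false]) lev
        = (if lev = 0 then 2 else 0) + feet ([] : List Bool) (lev - 1) :=
      feet_enclose (by simp) lev
    rw [feet_nil] at he
    rw [show pk (m+1) = (true :: ([] : List Bool) ++ [false]) ++ pk m from rfl]
    rw [ih] at h
    rw [he] at h
    have e1 : (lev - 1 = 0) ↔ (lev = 1) := by constructor <;> intro <;> omega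
    simp only [e1] at h
    split_ifs at h <;> split_ifs <;> omega

def Q : List ℕ → List Bool
  | [] => []
  | a :: t => (true :: Q t ++ [false]) ++ pk (a-1)

lemma isDyck_Q (l : List ℕ) : IsDyck (Q l) := by
  induction l with
  | nil => exact isDyck_nil
  | cons a t ih => exact isDyck_append (isDyck_enclose ih) (isDyck_pk _)

lemma Q_length (l : List ℕ) (hl : ∀ x ∈ l, 0 < x) : (Q l).length = 2 * l.sum := by
  induction l with
  | nil => rfl
  | cons a t ih =>
    have ha : 0 < a := hl a (by simp)
    have iht := ih (fun x hx => hl x (by simp [hx]))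
    rw [show Q (a :: t) = (true :: Q t ++ [false]) ++ pk (a-1) from rfl]
    simp [pk_length, iht]
    omega

def aget (l : List ℕ) (z : ℤ) : ℕ :=
  if z ≤ 0 then (if z = 0 then 1 else 0) else l.getD (z.toNat - 1) 0

def Fz (l : List ℕ) (z : ℤ) : ℕ := if z < 0 then 0 else aget l z + aget l (z+1)

lemma aget_neg (l : List ℕ) {z : ℤ} (h : z < 0) : aget l z = 0 := by
  unfold aget
  rw [if_pos (le_of_lt h), if_neg (by omega)]

lemma aget_zero (l : List ℕ) : aget l 0 = 1 := rfl

lemma aget_one (a : ℕ) (t : List ℕ) : aget (a :: t) 1 = a := rfl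

lemma aget_nil {z : ℤ} (h : 0 < z) : aget [] z = 0 := by
  simp [aget]; omega

lemma aget_cons_succ (a : ℕ) (t : List ℕ) {z : ℤ} (h : 1 ≤ z) :
    aget (a :: t) (z + 1) = aget t z := by
  unfold aget
  rw [if_neg (by omega), if_neg (by omega)]
  have h1 : (z+1).toNat - 1 = (z.toNat - 1) + 1 := by omega
  rw [h1, List.getD_cons_succ]

lemma feet_Q (l : List ℕ) (hl : ∀ x ∈ l, 0 < x) (lev : ℤ) :
    feet (Q l) lev = Fz l lev := by
  induction l generalizing lev with
  | nil =>
    rw [show Q [] = [] from rfl, feet_nil, Fz]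
    rcases lt_trichotomy lev 0 with h | h | h
    · rw [if_pos h, if_neg (by omega)]
    · subst h
      rw [if_pos rfl, if_neg (lt_irrefl 0), aget_zero, show aget [] (0+1) = 0 from aget_nil one_pos]
    · rw [if_neg (by omega), if_neg (by omega), aget_nil h, aget_nil (by omega)]
  | cons a t ih =>
    have ha : 0 < a := hl a (by simp)
    have iht := fun lv => ih (fun x hx => hl x (by simp [hx])) lv
    have hQt : IsDyck (Q t) := isDyck_Q t
    have h := feet_append (true :: Q t ++ [false]) (pk (a-1)) lev
    have hH : dheight (true :: Q t ++ [false]) ((true :: Q t ++ [false]).length) = 0 := by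
      rw [dheight_of_le _ (le_refl _)]; exact (isDyck_enclose hQt).1
    rw [hH, sub_zero] at h
    rw [feet_enclose hQt.1 lev, feet_pk] at h
    rw [show Q (a :: t) = (true :: Q t ++ [false]) ++ pk (a-1) from rfl]
    rw [iht (lev - 1)] at h
    -- now case on lev
    rcases lt_trichotomy lev 0 with hc | hc | hc
    · have f1 : Fz t (lev - 1) = 0 := by rw [Fz, if_pos (by omega)]
      have f2 : Fz (a :: t) lev = 0 := by rw [Fz, if_pos (by omega)]
      rw [f1] at h
      rw [f2]
      have : ¬ lev = 0 := by omega
      have : ¬ lev = 1 := by omega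
      split_ifs at h <;> omega
    · subst hc
      have f1 : Fz t (-1) = 0 := by rw [Fz, if_pos (by norm_num)]
      have f2 : Fz (a :: t) 0 = 1 + a := by
        rw [Fz, if_neg (by norm_num), aget_zero, zero_add, aget_one]
      rw [show (0:ℤ) - 1 = -1 by norm_num, f1] at h
      rw [f2]
      split_ifs at h <;> omega
    · -- lev ≥ 1
      have f1 : Fz t (lev - 1) = aget t (lev - 1) + aget t lev := by
        rw [Fz, if_neg (by omega)]
        congr 1
        congr 1
        omega
      rcases eq_or_lt_of_le (show (1:ℤ) ≤ lev by omega) with h1 | h1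
      · -- lev = 1
        have hl1 : lev = 1 := h1.symm
        subst hl1
        have f2 : Fz (a :: t) 1 = a + aget t 1 := by
          rw [Fz, if_neg (by norm_num), aget_one, aget_cons_succ a t (le_refl 1)]
        rw [f1] at h
        rw [f2]
        rw [show (1:ℤ) - 1 = 0 by norm_num, aget_zero] at h
        split_ifs at h <;> omega
      · -- lev ≥ 2
        have f2 : Fz (a :: t) lev = aget t (lev - 1) + aget t lev := by
          rw [Fz, if_neg (by omega)]
          congr 1
          · rw [show lev = (lev - 1) + 1 by ring]
            rw [aget_cons_succ a t (by omega)]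
            congr 1; ring
          · rw [aget_cons_succ a t (by omega)]
        rw [f1] at h
        rw [f2]
        split_ifs at h <;> omega
def addList : List ℕ → List ℕ → List ℕ
  | [], t => t
  | s, [] => s
  | a::s, b::t => (a+b) :: addList s t

lemma addList_getD (s t : List ℕ) (j : ℕ) :
    (addList s t).getD j 0 = s.getD j 0 + t.getD j 0 := by
  induction s generalizing t j with
  | nil => simp [addList]
  | cons a s ih =>
    cases t with
    | nil => simp [addList]
    | cons b t =>
      cases j with
      | zero => simp [addList]
      | succ j =>
        rw [show addList (a::s) (b::t) = (a+b) :: addList s t from rfl,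
          List.getD_cons_succ, List.getD_cons_succ, List.getD_cons_succ]
        exact ih t j

lemma addList_sum (s t : List ℕ) : (addList s t).sum = s.sum + t.sum := by
  induction s generalizing t with
  | nil => simp [addList]
  | cons a s ih =>
    cases t with
    | nil => simp [addList]
    | cons b t => simp [addList, ih]; ring

lemma addList_pos {s t : List ℕ} (hs : ∀ x ∈ s, 0 < x) (ht : ∀ x ∈ t, 0 < x) :
    ∀ x ∈ addList s t, 0 < x := by
  induction s generalizing t with
  | nil => simpa [addList] using ht
  | cons a s ih =>
    cases t with
    | nil => simpa [addList] using hs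
    | cons b t =>
      intro x hx
      rw [show addList (a::s) (b::t) = (a+b) :: addList s t from rfl] at hx
      rcases List.mem_cons.1 hx with h | h
      · have := hs a (by simp); omega
      · exact ih (fun y hy => hs y (by simp [hy])) (fun y hy => ht y (by simp [hy])) x h

lemma aget_pos_eq (l : List ℕ) {z : ℤ} (h : 0 < z) :
    aget l z = l.getD (z.toNat - 1) 0 := by
  unfold aget
  rw [if_neg (by omega)]

lemma aget_add (lq lr : List ℕ) {z : ℤ} (h : 1 ≤ z) :
    aget (addList (1 :: lq) lr) z = aget lq (z - 1) + aget lr z := by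
  rw [aget_pos_eq _ (by omega), aget_pos_eq lr (by omega), addList_getD]
  congr 1
  rcases eq_or_lt_of_le h with h1 | h1
  · rw [← h1]
    rfl
  · rw [aget_pos_eq lq (by omega)]
    have e1 : z.toNat - 1 = ((z-1).toNat - 1) + 1 := by omega
    rw [e1, List.getD_cons_succ]

lemma Fz_comb (lq lr : List ℕ) (lev : ℤ) :
    Fz (addList (1 :: lq) lr) lev
      = (if lev = 0 then 1 else 0) + Fz lq (lev - 1) + Fz lr lev := by
  rcases lt_trichotomy lev 0 with h | h | h
  · have l1 : Fz (addList (1::lq) lr) lev = 0 := by rw [Fz, if_pos h]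
    have l2 : Fz lq (lev - 1) = 0 := by rw [Fz, if_pos (by omega)]
    have l3 : Fz lr lev = 0 := by rw [Fz, if_pos h]
    rw [l1, l2, l3, if_neg (by omega)]
  · subst h
    have l1 : Fz (addList (1::lq) lr) 0 = 1 + (1 + aget lr 1) := by
      rw [Fz, if_neg (by norm_num), aget_zero, zero_add, aget_add lq lr (le_refl 1),
        show ((1:ℤ)-1) = 0 by norm_num, aget_zero]
    have l2 : Fz lq ((0:ℤ) - 1) = 0 := by rw [Fz, if_pos (by norm_num)]
    have l3 : Fz lr 0 = 1 + aget lr 1 := by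
      rw [Fz, if_neg (by norm_num), aget_zero, zero_add]
    rw [l1, l2, l3, if_pos rfl]
  · have l1 : Fz (addList (1::lq) lr) lev
        = (aget lq (lev-1) + aget lr lev) + (aget lq lev + aget lr (lev+1)) := by
      rw [Fz, if_neg (by omega), aget_add lq lr (by omega), aget_add lq lr (by omega),
        show lev + 1 - 1 = lev by ring]
    have l2 : Fz lq (lev - 1) = aget lq (lev-1) + aget lq lev := by
      rw [Fz, if_neg (by omega), show lev - 1 + 1 = lev by ring]
    have l3 : Fz lr lev = aget lr lev + aget lr (lev+1) := by
      rw [Fz, if_neg (by omega)]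
    rw [l1, l2, l3, if_neg (by omega)]
    ring
lemma dheight_succ (p : List Bool) (k : ℕ) (h : k < p.length) :
    dheight p (k+1) = dheight p k + dstep p[k] := by
  unfold dheight
  simp only [List.map_take]
  have hk : (List.map dstep p)[k]? = some (dstep p[k]) := by
    rw [List.getElem?_eq_getElem (by simpa using h)]
    simp
  rw [List.take_succ, hk]
  simp

lemma dyck_decomp {p : List Bool} (hp : IsDyck p) (hne : p ≠ []) :
    ∃ q r, IsDyck q ∧ IsDyck r ∧ p = (true :: q ++ [false]) ++ r := by
  classical
  obtain ⟨hsum, hpos⟩ := hp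
  have hlen : 0 < p.length := List.length_pos_iff.2 hne
  have hwit : 1 ≤ p.length ∧ dheight p p.length = 0 :=
    ⟨hlen, by rw [dheight_of_le p (le_refl _)]; exact hsum⟩
  have hex : ∃ k, 1 ≤ k ∧ dheight p k = 0 := ⟨p.length, hwit⟩
  obtain ⟨j, hj, hjmin, hjle⟩ : ∃ j, (1 ≤ j ∧ dheight p j = 0) ∧
      (∀ m, m < j → ¬(1 ≤ m ∧ dheight p m = 0)) ∧ j ≤ p.length :=
    ⟨Nat.find hex, Nat.find_spec hex, fun m hm => Nat.find_min hex hm, Nat.find_min' hex hwit⟩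
  obtain ⟨hj1, hj0⟩ := hj
  have hmin : ∀ m, 1 ≤ m → m < j → 1 ≤ dheight p m := by
    intro m h1 h2
    have hnm := hjmin m h2
    push_neg at hnm
    have h3 := hnm h1
    have h4 := hpos m
    omega
  have hstep0 : dheight p 1 = dheight p 0 + dstep p[0] := dheight_succ p 0 hlen
  have hd0 : dheight p 0 = 0 := rfl
  have hp0 : p[0] = true := by
    by_contra hc
    have hf : p[0] = false := by simpa using hc
    rw [hf, hd0] at hstep0
    have := hpos 1
    simp [dstep] at hstep0
    omega
  have hd1 : dheight p 1 = 1 := by rw [hstep0, hp0, hd0]; simp [dstep]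
  have hj2 : 2 ≤ j := by
    by_contra hc
    have hcc : j = 1 := by omega
    rw [hcc] at hj0
    omega
  have hjlt : j - 1 < p.length := by omega
  have hstepj : dheight p j = dheight p (j-1) + dstep p[j-1] := by
    have := dheight_succ p (j-1) hjlt
    rwa [show j - 1 + 1 = j by omega] at this
  have hdj1 : 1 ≤ dheight p (j-1) := hmin (j-1) (by omega) (by omega)
  have hpj : p[j-1] = false := by
    by_contra hc
    have ht : p[j-1] = true := by simpa using hc
    rw [ht] at hstepj
    simp [dstep] at hstepj
    omega
  have hdj1' : dheight p (j-1) = 1 := by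
    rw [hpj] at hstepj
    simp [dstep] at hstepj
    omega
  set q := (p.take (j-1)).drop 1 with hqdef
  set r := p.drop j with hrdef
  have hqlen : q.length = j - 2 := by
    rw [hqdef, List.length_drop, List.length_take]
    omega
  have htlen : 0 < (p.take (j-1)).length := by
    rw [List.length_take]; omega
  have e1 : p.take (j-1) = true :: q := by
    calc p.take (j-1) = (p.take (j-1))[0] :: (p.take (j-1)).drop 1 := by
          have h2 := List.drop_eq_getElem_cons (i := 0) htlen
          rwa [List.drop_zero] at h2
      _ = true :: q := by rw [List.getElem_take, hp0, hqdef]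
  have e2 : p.drop (j-1) = false :: r := by
    rw [List.drop_eq_getElem_cons hjlt, hpj, hrdef,
      show j - 1 + 1 = j by omega]
  have hdecomp : p = (true :: q ++ [false]) ++ r := by
    conv_lhs => rw [← List.take_append_drop (j-1) p]
    rw [e1, e2]
    simp
  -- heights of q
  have hE : (true :: (q ++ [false])).length = j := by
    simp [hqlen]; omega
  have hpE : ∀ k ≤ j, dheight p k = dheight (true :: (q ++ [false])) k := by
    intro k hk
    rw [hdecomp, show ((true :: q ++ [false]) ++ r) = (true :: (q ++ [false])) ++ r by simp,
      dheight_append_left _ _ (by rw [hE]; exact hk)]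
  have hq_height : ∀ i ≤ q.length, dheight q i = dheight p (i+1) - 1 := by
    intro i hi
    have h1 : dheight p (i+1) = dheight (true :: (q ++ [false])) (i+1) :=
      hpE (i+1) (by omega)
    rw [h1, dheight_cons, show dstep true = 1 from rfl,
      dheight_append_left q [false] hi]
    ring
  have hqsum : (q.map dstep).sum = 0 := by
    have := hq_height q.length (le_refl _)
    rw [dheight_of_le q (le_refl _)] at this
    rw [this, hqlen, show j - 2 + 1 = j - 1 by omega, hdj1']
    ring
  have hqdyck : IsDyck q := by
    refine ⟨hqsum, fun i => ?_⟩
    rcases le_or_gt i q.length with h | h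
    · rw [hq_height i h]
      have : 1 ≤ dheight p (i+1) := hmin (i+1) (by omega) (by omega)
      omega
    · rw [dheight_of_le q (le_of_lt h), hqsum]
  -- heights of r
  have hr_height : ∀ i, dheight r i = dheight p (j + i) := by
    intro i
    conv_rhs => rw [hdecomp]
    rw [show ((true :: q ++ [false]) ++ r) = (true :: (q ++ [false])) ++ r by simp]
    rw [show j + i = (true :: (q ++ [false])).length + i by rw [hE]]
    rw [dheight_append_right]
    have : dheight (true :: (q ++ [false])) ((true :: (q ++ [false])).length) = 0 := by
      rw [hE, ← hpE j (le_refl _), hj0]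
    rw [this, zero_add]
  have hrsum : (r.map dstep).sum = 0 := by
    have := hr_height r.length
    rw [dheight_of_le r (le_refl _)] at this
    rw [this]
    have hrl : r.length = p.length - j := by rw [hrdef, List.length_drop]
    rw [hrl, show j + (p.length - j) = p.length by omega, dheight_of_le p (le_refl _)]
    exact hsum
  have hrdyck : IsDyck r := ⟨hrsum, fun i => by rw [hr_height i]; exact hpos _⟩
  exact ⟨q, r, hqdyck, hrdyck, hdecomp⟩
lemma analysis : ∀ N p, p.length ≤ N → IsDyck p →
    ∃ l : List ℕ, (∀ x ∈ l, 0 < x) ∧ 2 * l.sum = p.length ∧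
      ∀ lev, feet p lev = Fz l lev := by
  intro N
  induction N with
  | zero =>
    intro p hlen hp
    have hpn : p = [] := List.length_eq_zero_iff.1 (by omega)
    subst hpn
    exact ⟨[], by simp, by simp, fun lev => feet_Q [] (by simp) lev⟩
  | succ N ih =>
    intro p hlen hp
    by_cases hne : p = []
    · subst hne
      exact ⟨[], by simp, by simp, fun lev => feet_Q [] (by simp) lev⟩
    · obtain ⟨q, r, hq, hr, hdec⟩ := dyck_decomp hp hne
      have hplen : p.length = q.length + r.length + 2 := by
        rw [hdec]; simp [List.length_append]; omega
      obtain ⟨lq, hlq_pos, hlq_sum, hlq_feet⟩ := ih q (by omega) hq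
      obtain ⟨lr, hlr_pos, hlr_sum, hlr_feet⟩ := ih r (by omega) hr
      refine ⟨addList (1 :: lq) lr, addList_pos ?_ hlr_pos, ?_, ?_⟩
      · intro x hx
        rcases List.mem_cons.1 hx with h | h
        · omega
        · exact hlq_pos x h
      · rw [addList_sum, List.sum_cons]
        omega
      · intro lev
        have h := feet_append (true :: q ++ [false]) r lev
        have hE : dheight (true :: q ++ [false]) ((true :: q ++ [false]).length) = 0 := by
          rw [dheight_of_le _ (le_refl _)]
          exact (isDyck_enclose hq).1
        rw [hE, sub_zero, feet_enclose hq.1, hlq_feet, hlr_feet, ← hdec] at h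
        rw [Fz_comb lq lr lev]
        split_ifs at h ⊢ <;> omega

lemma getD_ext : ∀ (l l' : List ℕ), (∀ x ∈ l, 0 < x) → (∀ x ∈ l', 0 < x) →
    (∀ j, l.getD j 0 = l'.getD j 0) → l = l' := by
  intro l
  induction l with
  | nil =>
    intro l' _ hl' h
    cases l' with
    | nil => rfl
    | cons b t =>
      have h0 := h 0
      simp [List.getD] at h0
      have := hl' b (by simp)
      omega
  | cons a t ih =>
    intro l' hl hl' h
    cases l' with
    | nil =>
      have h0 := h 0
      simp [List.getD] at h0
      have := hl a (by simp)
      omega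
    | cons b t' =>
      have h0 := h 0
      simp [List.getD] at h0
      subst h0
      congr 1
      exact ih t' (fun x hx => hl x (by simp [hx])) (fun x hx => hl' x (by simp [hx]))
        (fun j => by have := h (j+1); simpa [List.getD_cons_succ] using this)

lemma aget_ext (l l' : List ℕ) (hl : ∀ x ∈ l, 0 < x) (hl' : ∀ x ∈ l', 0 < x)
    (h : ∀ k : ℕ, Fz l (k : ℤ) = Fz l' (k : ℤ)) : l = l' := by
  have key : ∀ k : ℕ, aget l (k : ℤ) = aget l' (k : ℤ) := by
    intro k
    induction k with
    | zero => simp [aget_zero]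
    | succ k ihk =>
      have hk := h k
      rw [Fz, Fz, if_neg (by omega), if_neg (by omega)] at hk
      have e : ((k+1 : ℕ) : ℤ) = (k : ℤ) + 1 := by push_cast; ring
      rw [e]
      omega
  apply getD_ext l l' hl hl'
  intro j
  have hk := key (j+1)
  rw [aget_pos_eq l (by positivity), aget_pos_eq l' (by positivity)] at hk
  have e : ((j+1 : ℕ) : ℤ).toNat - 1 = j := by omega
  rwa [e] at hk

/-- The number of distinct frames of Dyck paths of length 2n is 2^(n-1). -/
theorem stmt8 (n : ℕ) (hn : 1 ≤ n) :
    Set.ncard {I : ℕ → ℕ | ∃ p : List Bool, p.length = 2 * n ∧ IsDyck p ∧ frame p = I} =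
      2 ^ (n - 1) := by
  classical
  have hset : {I : ℕ → ℕ | ∃ p : List Bool, p.length = 2 * n ∧ IsDyck p ∧ frame p = I}
      = (fun (l : List ℕ) (k : ℕ) => Fz l (k : ℤ)) ''
          {l : List ℕ | (∀ x ∈ l, 0 < x) ∧ l.sum = n} := by
    ext I
    simp only [Set.mem_setOf_eq, Set.mem_image]
    constructor
    · rintro ⟨p, hlen, hp, hframe⟩
      obtain ⟨l, hpos, hsum, hfeet⟩ := analysis p.length p (le_refl _) hp
      refine ⟨l, ⟨hpos, by omega⟩, ?_⟩
      funext k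
      rw [← hfeet (k : ℤ), ← hframe]
      rfl
    · rintro ⟨l, ⟨hpos, hsum⟩, rfl⟩
      exact ⟨Q l, by rw [Q_length l hpos, hsum], isDyck_Q l,
        funext (fun k => feet_Q l hpos (k : ℤ))⟩
  rw [hset]
  have hinj : Set.InjOn (fun (l : List ℕ) (k : ℕ) => Fz l (k : ℤ))
      {l : List ℕ | (∀ x ∈ l, 0 < x) ∧ l.sum = n} := by
    intro l hl l' hl' h
    exact aget_ext l l' hl.1 hl'.1 (fun k => congrFun h k)
  rw [Set.ncard_image_of_injOn hinj]
  have hT : {l : List ℕ | (∀ x ∈ l, 0 < x) ∧ l.sum = n}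
      = Set.range (fun c : Composition n => c.blocks) := by
    ext l
    constructor
    · rintro ⟨hpos, hsum⟩
      exact ⟨⟨l, fun {i} hi => hpos i hi, hsum⟩, rfl⟩
    · rintro ⟨c, rfl⟩
      exact ⟨fun x hx => c.blocks_pos hx, c.blocks_sum⟩
  have hbinj : Function.Injective (fun c : Composition n => c.blocks) := by
    intro c c' h
    cases c; cases c'
    simpa using h
  rw [hT, ← Set.image_univ, Set.ncard_image_of_injOn (hbinj.injOn),
    Set.ncard_univ, Nat.card_eq_fintype_card, composition_card]
end

section
/- Let I = (i_0, i_1, ...) be an eventually-zero sequence of nonnegative integers with i_0 = 2. Then the shifted sequence r(I) = (i_1, i_2, ...) is the frame of some Dyck path if and only if I is the frame of some Dyck path. -/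
lemma dheight_zero (p : List Bool) : dheight p 0 = 0 := rfl

lemma dheight_mid (q : List Bool) {k : ℕ} (hk : k ≤ q.length) :
    dheight (true :: q ++ [false]) (k + 1) = 1 + dheight q k := by
  unfold dheight
  rw [List.cons_append, List.take_succ_cons, List.take_append,
    Nat.sub_eq_zero_of_le hk, List.take_zero, List.append_nil]
  simp [dstep]

lemma sum_mid (q : List Bool) :
    ((true :: q ++ [false]).map dstep).sum = (q.map dstep).sum := by
  simp [dstep]

lemma feet_mid (q : List Bool) (hs : (q.map dstep).sum = 0) (l : ℤ) :
    feet (true :: q ++ [false]) l = (if l = 0 then 2 else 0) + feet q (l - 1) := by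
  have hlen : (true :: q ++ [false]).length = q.length + 2 := by simp
  have htop : dheight (true :: q ++ [false]) (q.length + 2) = 0 := by
    rw [dheight_of_le _ hlen.le, sum_mid, hs]
  unfold feet
  rw [hlen]
  rw [show q.length + 2 + 1 = (q.length + 2) + 1 from rfl, List.range_succ_eq_map,
    show q.length + 2 = (q.length + 1) + 1 from rfl, List.range_succ]
  simp only [List.map_cons, List.map_append, List.map_nil, List.count_cons, List.count_append,
    List.count_nil]
  have hmid : List.map ((dheight (true :: q ++ [false])) ∘ Nat.succ) (List.range (q.length + 1))
      = List.map (fun k => 1 + dheight q k) (List.range (q.length + 1)) := by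
    apply List.map_congr_left
    intro k hk
    simp only [Function.comp]
    exact dheight_mid q (by simpa using Nat.lt_succ_iff.mp (List.mem_range.mp hk))
  rw [List.map_map, hmid]
  have hcount : (List.map (fun k => 1 + dheight q k) (List.range (q.length + 1))).count l
      = feet q (l - 1) := by
    unfold feet
    rw [show (fun k => 1 + dheight q k) = ((fun x => 1 + x) ∘ dheight q) from rfl,
      ← List.map_map, List.count_eq_countP, List.count_eq_countP, List.countP_map]
    apply List.countP_congr
    intro x _
    simp only [Function.comp, beq_iff_eq]
    omega
  rw [hcount]
  have h0 : dheight (true :: q ++ [false]) 0 = 0 := rfl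
  simp only [List.map_cons, List.count_cons, List.count_nil, h0]
  rw [show Nat.succ (q.length + 1) = q.length + 2 from rfl, htop]
  simp only [beq_iff_eq]
  rw [show List.count (l - 1) (List.map (dheight q) (List.range (q.length + 1))) = feet q (l - 1)
    from rfl]
  rcases eq_or_ne l 0 with rfl | hl
  · norm_num
    omega
  · rw [if_neg hl, if_neg (fun h => hl h.symm)]
    omega

lemma feet_neg (q : List Bool) (hq : ∀ k, 0 ≤ dheight q k) : feet q (-1) = 0 := by
  unfold feet
  rw [List.count_eq_zero]
  intro hmem
  obtain ⟨k, _, hk⟩ := List.mem_map.mp hmem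
  have := hq k
  omega

lemma feet_finset (p : List Bool) (l : ℤ) :
    feet p l = ((Finset.range (p.length + 1)).filter (fun k => dheight p k = l)).card := by
  unfold feet
  rw [List.count_eq_countP, List.countP_map]
  have : ((Finset.range (p.length + 1)).filter (fun k => dheight p k = l)).card
      = (List.range (p.length + 1)).countP (fun k => decide (dheight p k = l)) := by
    simp only [Finset.filter, Finset.range, Finset.card, Multiset.range, Multiset.filter_coe,
      Multiset.coe_card]
    rw [List.countP_eq_length_filter]
  rw [this]
  apply List.countP_congr
  intro x _
  simp [Function.comp]

lemma dheight_step (p : List Bool) {k : ℕ} (h : k < p.length) :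
    dheight p (k + 1) = dheight p k + dstep (p.get ⟨k, h⟩) := by
  unfold dheight
  rw [List.take_succ, List.getElem?_eq_getElem h, Option.toList_some, List.map_append,
    List.sum_append]
  simp

/-- If the first entry of an eventually zero sequence is 2, removing it preserves admissibility
in both directions. -/
theorem stmt9 (I : ℕ → ℕ) (hz : ∃ N, ∀ k ≥ N, I k = 0) (h0 : I 0 = 2) :
    Admissible (fun k => I (k + 1)) ↔ Admissible I := by
  constructor
  · rintro ⟨q, ⟨hqs, hqh⟩, hqf⟩
    refine ⟨true :: q ++ [false], ⟨?_, ?_⟩, ?_⟩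
    · rw [sum_mid, hqs]
    · intro k
      match k with
      | 0 => simp [dheight_zero]
      | (k+1) =>
        by_cases hk : k ≤ q.length
        · rw [dheight_mid q hk]; have := hqh k; omega
        · rw [dheight_of_le]
          · rw [sum_mid, hqs]
          · simp; omega
    · funext k
      match k with
      | 0 =>
        show feet _ 0 = I 0
        rw [feet_mid q hqs, h0, show ((0:ℤ) - 1) = -1 by norm_num, feet_neg q hqh]
        simp
      | (k+1) =>
        show feet _ ((k:ℤ)+1) = I (k+1)
        rw [feet_mid q hqs]
        have : ((k:ℤ) + 1 - 1) = (k:ℤ) := by ring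
        rw [this, if_neg (by positivity)]
        have := congrFun hqf k
        simpa [frame] using this
  · rintro ⟨p, ⟨hps, hph⟩, hpf⟩
    have hfeet0 : feet p 0 = 2 := by
      have := congrFun hpf 0; simpa [frame, h0] using this
    -- p is nonempty
    have hne : p ≠ [] := by
      rintro rfl
      have : feet ([] : List Bool) 0 = 1 := by decide
      omega
    have hlenpos : 0 < p.length := List.length_pos_iff.mpr hne
    -- the endpoint heights are 0
    have hend : dheight p p.length = 0 := by
      rw [dheight_of_le p le_rfl]; exact hps
    -- interior positivity
    have hint : ∀ k, 0 < k → k < p.length → 1 ≤ dheight p k := by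
      intro k hk1 hk2
      rcases lt_or_ge 0 (dheight p k) with h | h
      · omega
      have hzero : dheight p k = 0 := le_antisymm h (hph k)
      exfalso
      have hsub : ({0, k, p.length} : Finset ℕ) ⊆
          (Finset.range (p.length + 1)).filter (fun j => dheight p j = 0) := by
        intro j hj
        simp only [Finset.mem_insert, Finset.mem_singleton] at hj
        rcases hj with rfl | rfl | rfl <;>
          simp [Finset.mem_filter, Finset.mem_range, dheight_zero, hzero, hend] <;> omega
      have hcard : ({0, k, p.length} : Finset ℕ).card = 3 := by
        rw [Finset.card_insert_of_notMem, Finset.card_insert_of_notMem] <;>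
          simp <;> omega
      have := Finset.card_le_card hsub
      rw [hcard, ← feet_finset] at this
      omega
    -- length ≥ 2
    have hlen2 : 2 ≤ p.length := by
      by_contra h
      have h1 : p.length = 1 := by omega
      have hd1 : dheight p 1 = (p.map dstep).sum := dheight_of_le p (by omega)
      rw [hps] at hd1
      have h2 := dheight_step p (k := 0) (by omega)
      rw [dheight_zero, zero_add] at h2
      cases hb : p.get ⟨0, by omega⟩ <;> rw [hb] at h2 <;> simp [dstep] at h2 <;> omega
    -- first step is up
    have hfirst : p.get ⟨0, by omega⟩ = true := by
      have h2 := dheight_step p (k := 0) (by omega)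
      rw [dheight_zero] at h2
      have h3 := hint 1 (by omega) (by omega)
      cases hb : p.get ⟨0, by omega⟩
      · rw [hb] at h2; simp [dstep] at h2; omega
      · rfl
    -- last step is down
    have hlast : p.get ⟨p.length - 1, by omega⟩ = false := by
      have h2 := dheight_step p (k := p.length - 1) (by omega)
      rw [show p.length - 1 + 1 = p.length by omega, hend] at h2
      have h3 := hint (p.length - 1) (by omega) (by omega)
      cases hb : p.get ⟨p.length - 1, by omega⟩
      · rfl
      · rw [hb] at h2; simp [dstep] at h2; omega
    -- decompose p = true :: q ++ [false]
    obtain ⟨a, t, rfl⟩ := List.exists_cons_of_ne_nil hne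
    have htne : t ≠ [] := by
      rintro rfl; simp at hlen2
    set q := t.dropLast with hq
    have hdecomp : a :: t = true :: q ++ [false] := by
      have h1 : a = true := by simpa using hfirst
      have h2 : t.getLast htne = false := by
        have : (a :: t).get ⟨(a :: t).length - 1, by omega⟩ = (a :: t).getLast (by simp) := by
          simp [List.getLast_eq_getElem]
        rw [this] at hlast
        rw [← hlast, List.getLast_cons htne]
      rw [h1, ← List.dropLast_append_getLast htne, h2, ← hq]
      simp
    rw [hdecomp] at hps hph hpf hfeet0 hint hend hlen2
    clear hdecomp hfirst hlast hlenpos hne hfeet0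
    -- q is Dyck
    have hlq : (true :: q ++ [false]).length = q.length + 2 := by simp
    have hqs : (q.map dstep).sum = 0 := by
      rw [sum_mid] at hps; exact hps
    have hqh : ∀ k, 0 ≤ dheight q k := by
      intro k
      by_cases hk : k ≤ q.length
      · have := hint (k + 1) (by omega) (by omega)
        rw [dheight_mid q hk] at this
        omega
      · rw [dheight_of_le q (by omega), hqs]
    refine ⟨q, ⟨hqs, hqh⟩, ?_⟩
    funext k
    have := congrFun hpf (k + 1)
    simp only [frame] at this ⊢
    rw [show ((k+1:ℕ):ℤ) = (k:ℤ)+1 by push_cast; ring, feet_mid q hqs,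
      if_neg (by positivity)] at this
    simpa using this
end
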